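/- Let X be a Hilbert space and f : X → ℝ ∪ {+∞} a proper Φ_lsc-convex function. Then the set dom(∂_{Φ_lsc} f) := {x ∈ X : ∂_{Φ_lsc} f(x) ≠ ∅} is dense in dom(f). -/

import Mathlib

open Filter Topology

set_option linter.unusedSectionVars false
set_option maxHeartbeats 2000000

namespace BPaux

variable {X : Type*} [NormedAddCommGroup X] [InnerProductSpace ℝ X]

noncomputable def seq (f : X → EReal) (xb : X) (lam δ : ℝ) : ℕ → X × (X → EReal) :=
  fun n => Nat.rec ((xb, fun x => f x + ((lam * ‖x - xb‖ ^ 2 : ℝ) : EReal)) : X × (X → EReal))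
    (fun n p =>
      let y : X := @dite X (∃ z, p.2 z < (⨅ w, p.2 w) + ((δ * (1/4) ^ n : ℝ) : EReal))
        (Classical.dec _) (fun h => h.choose) (fun _ => xb)
      (y, fun x => p.2 x + ((lam * (1/2) ^ (n+1) * ‖x - y‖ ^ 2 : ℝ) : EReal))) n

noncomputable def pt (f : X → EReal) (xb : X) (lam δ : ℝ) (n : ℕ) : X := (seq f xb lam δ n).1

noncomputable def G (f : X → EReal) (xb : X) (lam δ : ℝ) (n : ℕ) : X → EReal := (seq f xb lam δ n).2

variable (f : X → EReal) (xb : X) (lam δ : ℝ)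

lemma pt_zero : pt f xb lam δ 0 = xb := rfl

lemma G_zero (x : X) : G f xb lam δ 0 x = f x + ((lam * ‖x - xb‖ ^ 2 : ℝ) : EReal) := rfl

lemma pt_succ (n : ℕ) : pt f xb lam δ (n+1) =
    @dite X (∃ z, G f xb lam δ n z < (⨅ w, G f xb lam δ n w) + ((δ * (1/4) ^ n : ℝ) : EReal))
      (Classical.dec _) (fun h => h.choose) (fun _ => xb) := rfl

lemma G_succ (n : ℕ) (x : X) : G f xb lam δ (n+1) x =
    G f xb lam δ n x + ((lam * (1/2) ^ (n+1) * ‖x - pt f xb lam δ (n+1)‖ ^ 2 : ℝ) : EReal) := rfl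

lemma pt_spec (n : ℕ)
    (h : ∃ z, G f xb lam δ n z < (⨅ w, G f xb lam δ n w) + ((δ * (1/4) ^ n : ℝ) : EReal)) :
    G f xb lam δ n (pt f xb lam δ (n+1)) <
      (⨅ w, G f xb lam δ n w) + ((δ * (1/4) ^ n : ℝ) : EReal) := by
  rw [pt_succ, dif_pos h]; exact h.choose_spec

lemma coe_sub_le {e : EReal} {a b : ℝ} (h : (a : EReal) ≤ e + (b : EReal)) :
    ((a - b : ℝ) : EReal) ≤ e := by
  have h2 := add_le_add_left h ((-b : ℝ) : EReal)
  have h3 : e + (b : EReal) + ((-b : ℝ) : EReal) = e := by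
    rw [add_assoc, ← EReal.coe_add]
    norm_num
  rw [h3] at h2
  calc ((a - b : ℝ) : EReal) = (a : EReal) + ((-b : ℝ) : EReal) := by
        rw [← EReal.coe_add]; ring_nf
    _ ≤ e := h2

end BPaux

def IsSupport {X : Type*} (Φ : Set (X → ℝ)) (f : X → EReal) (φ : X → ℝ) : Prop :=
  φ ∈ Φ ∧ ∀ x, (φ x : EReal) ≤ f x

def PhiConvex {X : Type*} (Φ : Set (X → ℝ)) (f : X → EReal) : Prop :=
  ∀ x, f x = ⨆ φ : {φ : X → ℝ // IsSupport Φ f φ}, ((φ : X → ℝ) x : EReal)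

def edom {X : Type*} (f : X → EReal) : Set X := {x | f x ≠ ⊤}

/-- The `Φ`-subdifferential of `f` at `x₀`. -/
def Subdiff {X : Type*} (Φ : Set (X → ℝ)) (f : X → EReal) (x₀ : X) :
    Set (X → ℝ) :=
  {φ | φ ∈ Φ ∧ ∀ x, ((φ x - φ x₀ : ℝ) : EReal) + f x₀ ≤ f x}

def PhiLsc (X : Type*) [NormedAddCommGroup X] [InnerProductSpace ℝ X] :
    Set (X → ℝ) :=
  {φ | ∃ (a : ℝ) (ℓ : X →L[ℝ] ℝ) (c : ℝ), 0 ≤ a ∧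
    ∀ x, φ x = -a * ‖x‖ ^ 2 + ℓ x + c}

/-- The domain of the `Φ_lsc`-subdifferential is dense in the effective domain. -/
theorem dense_dom_subdiff_phiLsc
    {X : Type*} [NormedAddCommGroup X] [InnerProductSpace ℝ X] [CompleteSpace X]
    (f : X → EReal) (hbot : ∀ x, f x ≠ ⊥)
    (hconv : PhiConvex (PhiLsc X) f) (hproper : (edom f).Nonempty) :
    edom f ⊆ closure {x | (Subdiff (PhiLsc X) f x).Nonempty} := by
  -- lower semicontinuity of f
  have hflsc : LowerSemicontinuous f := by
    have hfeq : f = fun x => ⨆ φ : {φ : X → ℝ // IsSupport (PhiLsc X) f φ},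
        ((φ : X → ℝ) x : EReal) := funext hconv
    rw [hfeq]
    apply lowerSemicontinuous_iSup
    intro φ
    obtain ⟨a, ℓ, c, ha, hφform⟩ := φ.2.1
    have hcont : Continuous fun x => ((φ : X → ℝ) x) := by
      have h1 : (fun x => (φ : X → ℝ) x) = fun x => -a*‖x‖^2 + ℓ x + c := funext hφform
      rw [h1]
      exact ((continuous_const.mul ((continuous_norm).pow 2)).add ℓ.continuous).add
        continuous_const
    exact (continuous_coe_real_ereal.comp hcont).lowerSemicontinuous
  intro xb hxb
  rw [Metric.mem_closure_iff]
  intro ε hε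
  classical
  have hxbot := hbot xb
  have hxtop : f xb ≠ ⊤ := hxb
  obtain ⟨r, hfxb⟩ : ∃ r : ℝ, f xb = (r : EReal) :=
    ⟨(f xb).toReal, (EReal.coe_toReal hxtop hxbot).symm⟩
  obtain ⟨δ, hδdef⟩ : ∃ y : ℝ, y = min (ε/4) (ε^2/512) := ⟨_, rfl⟩
  have hδpos : 0 < δ := by rw [hδdef]; exact lt_min (by linarith) (by positivity)
  have hδ1 : δ ≤ ε/4 := hδdef ▸ min_le_left _ _
  have hδ2 : δ ≤ ε^2/512 := hδdef ▸ min_le_right _ _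
  -- pick a support φ₀ with φ₀ xb > r - δ
  have hsup : ((r - δ : ℝ) : EReal) < f xb := by
    rw [hfxb]; exact_mod_cast sub_lt_self r hδpos
  rw [hconv xb, lt_iSup_iff] at hsup
  obtain ⟨⟨φ₀, hφ₀⟩, hnear⟩ := hsup
  have hnear' : r - δ < φ₀ xb := by exact_mod_cast hnear
  obtain ⟨a₀, ℓ₀, c₀, ha₀, hform⟩ := hφ₀.1
  have hle : ∀ x, ((φ₀ x : ℝ) : EReal) ≤ f x := hφ₀.2
  obtain ⟨C, hCdef⟩ : ∃ y : ℝ, y = 2*a₀*‖xb‖ + ‖ℓ₀‖ := ⟨_, rfl⟩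
  have hC : 0 ≤ C := by rw [hCdef]; positivity
  obtain ⟨M, hMdef⟩ : ∃ y : ℝ, y = max 1 ((2*C+2)/ε) := ⟨_, rfl⟩
  have hM1 : (1:ℝ) ≤ M := hMdef ▸ le_max_left _ _
  have hM2 : (2*C+2)/ε ≤ M := hMdef ▸ le_max_right _ _
  obtain ⟨lam, hlamdef⟩ : ∃ y : ℝ, y = a₀ + M := ⟨_, rfl⟩
  have hlam1 : (1:ℝ) ≤ lam := by rw [hlamdef]; linarith
  have hlam0 : (0:ℝ) < lam := by linarith
  -- the key quadratic lower estimate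
  have hquad : ∀ x : X, φ₀ xb + (M * ‖x - xb‖^2 - C * ‖x - xb‖) ≤ φ₀ x + lam * ‖x - xb‖^2 := by
    intro x
    have hxx : ‖x - xb‖^2 = ‖x‖^2 - 2*(inner ℝ x xb : ℝ) + ‖xb‖^2 := norm_sub_sq_real x xb
    have h5 : (inner ℝ (x - xb) xb : ℝ) ≤ ‖x - xb‖ * ‖xb‖ := real_inner_le_norm _ _
    have h5' : (inner ℝ (x - xb) xb : ℝ) = (inner ℝ x xb : ℝ) - ‖xb‖^2 := by
      rw [inner_sub_left, real_inner_self_eq_norm_sq]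
    have h6 : a₀ * ((inner ℝ x xb : ℝ) - ‖xb‖^2) ≤ a₀ * (‖x - xb‖ * ‖xb‖) := by
      apply mul_le_mul_of_nonneg_left _ ha₀
      rw [← h5']; exact h5
    have h7 : -(‖ℓ₀‖*‖x-xb‖) ≤ ℓ₀ x - ℓ₀ xb := by
      have h71 := ℓ₀.le_opNorm (x - xb)
      rw [map_sub] at h71
      have h72 : |ℓ₀ x - ℓ₀ xb| ≤ ‖ℓ₀‖ * ‖x - xb‖ := by
        rw [← Real.norm_eq_abs]; exact h71
      linarith [(abs_le.mp h72).1]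
    rw [hform x, hform xb, hCdef, hlamdef]
    nlinarith [h6, h7, hxx, ha₀, norm_nonneg (x - xb), norm_nonneg xb]
  obtain ⟨b₀, hb₀def⟩ : ∃ y : ℝ, y = φ₀ xb - C^2/4 := ⟨_, rfl⟩
  have hb₀ : ∀ x : X, b₀ ≤ φ₀ x + lam * ‖x - xb‖^2 := by
    intro x
    have h2 : -(C^2/4) ≤ M * ‖x - xb‖^2 - C*‖x - xb‖ := by
      nlinarith [sq_nonneg (2*‖x - xb‖ - C), mul_nonneg (sub_nonneg.2 hM1) (sq_nonneg ‖x - xb‖)]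
    rw [hb₀def]
    linarith [hquad x, h2]
  -- the construction
  obtain ⟨P, hPdef⟩ : ∃ y : ℕ → X, y = BPaux.pt f xb lam δ := ⟨_, rfl⟩
  obtain ⟨GG, hGdef⟩ : ∃ y : ℕ → X → EReal, y = BPaux.G f xb lam δ := ⟨_, rfl⟩
  obtain ⟨mE, hmEdef⟩ : ∃ y : ℕ → EReal, y = fun n => ⨅ w, GG n w := ⟨_, rfl⟩
  have hmEd : ∀ n, mE n = ⨅ w, GG n w := fun n => by rw [hmEdef]
  have hP0 : P 0 = xb := by rw [hPdef]; rfl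
  have hG0 : ∀ x, GG 0 x = f x + ((lam * ‖x - xb‖ ^ 2 : ℝ) : EReal) := by
    rw [hGdef]; exact BPaux.G_zero f xb lam δ
  have hGsucc : ∀ n x, GG (n+1) x =
      GG n x + ((lam * (1/2) ^ (n+1) * ‖x - P (n+1)‖ ^ 2 : ℝ) : EReal) := by
    rw [hGdef, hPdef]; exact BPaux.G_succ f xb lam δ
  -- partial sum formula
  have hGsum : ∀ n x, GG n x =
      f x + ((∑ i ∈ Finset.range (n+1), lam * (1/2)^i * ‖x - P i‖^2 : ℝ) : EReal) := by
    intro n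
    induction n with
    | zero =>
      intro x
      rw [hG0 x, Finset.sum_range_one, hP0]
      norm_num
    | succ n ih =>
      intro x
      rw [hGsucc n x, ih x, add_assoc, ← EReal.coe_add]
      congr 1
      exact congrArg _ (Finset.sum_range_succ _ (n+1)).symm
  -- lower bounds
  have hGlowR : ∀ n x, ((φ₀ x + lam * ‖x - xb‖^2 : ℝ) : EReal) ≤ GG n x := by
    intro n x
    have h1 : f x + ((lam * ‖x - xb‖ ^ 2 : ℝ) : EReal) ≤ GG n x := by
      induction n with
      | zero => rw [hG0]
      | succ n ih =>
        rw [hGsucc]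
        refine le_trans ih (le_add_of_nonneg_right ?_)
        have : (0:ℝ) ≤ lam * (1/2) ^ (n+1) * ‖x - P (n+1)‖ ^ 2 := by positivity
        exact_mod_cast this
    refine le_trans ?_ h1
    rw [EReal.coe_add]
    exact add_le_add_left (hle x) _
  have hGlow : ∀ n x, ((b₀ : ℝ) : EReal) ≤ GG n x := by
    intro n x
    refine le_trans ?_ (hGlowR n x)
    exact_mod_cast hb₀ x
  have hGxb : ∀ n, GG n xb ≠ ⊤ := by
    intro n
    rw [hGsum n xb]
    exact (EReal.add_lt_top hxtop (EReal.coe_ne_top _)).ne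
  have hmbot : ∀ n, mE n ≠ ⊥ := by
    intro n
    have h1 : ((b₀:ℝ) : EReal) ≤ mE n := by rw [hmEd]; exact le_iInf (hGlow n)
    exact ((EReal.bot_lt_coe b₀).trans_le h1).ne'
  have hmtop : ∀ n, mE n ≠ ⊤ := by
    intro n
    rw [hmEd]
    exact ((iInf_le _ xb).trans_lt (hGxb n).lt_top).ne
  obtain ⟨mR, hmR⟩ : ∃ y : ℕ → ℝ, ∀ n, mE n = ((y n : ℝ) : EReal) :=
    ⟨fun n => (mE n).toReal, fun n => (EReal.coe_toReal (hmtop n) (hmbot n)).symm⟩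
  -- the choice property
  have hpt : ∀ n, GG n (P (n+1)) < mE n + ((δ * (1/4) ^ n : ℝ) : EReal) := by
    intro n
    have hc : ∃ z, BPaux.G f xb lam δ n z <
        (⨅ w, BPaux.G f xb lam δ n w) + ((δ * (1/4) ^ n : ℝ) : EReal) := by
      rw [← hGdef]
      have h1 : mE n < mE n + ((δ * (1/4) ^ n : ℝ) : EReal) := by
        rw [hmR n, ← EReal.coe_add]
        exact_mod_cast lt_add_of_pos_right _ (by positivity)
      rw [hmEd n] at h1
      exact iInf_lt_iff.mp h1
    have := BPaux.pt_spec f xb lam δ n hc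
    rw [← hGdef, ← hPdef, ← hmEd n] at this
    exact this
  have hmE_le : ∀ n x, mE n ≤ GG n x := by
    intro n x; rw [hmEd]; exact iInf_le _ x
  -- step distance estimates
  have hstep : ∀ n, lam * (1/2)^(n+1) * ‖P (n+2) - P (n+1)‖^2 ≤ δ*(1/4)^n + δ*(1/4)^(n+1) := by
    intro n
    have e1 : ((lam * (1/2)^(n+1) * ‖P (n+2) - P (n+1)‖^2 : ℝ) : EReal) + mE n ≤
        ((mR n + (δ*(1/4)^n + δ*(1/4)^(n+1)) : ℝ) : EReal) := by
      have s1 : ((lam * (1/2)^(n+1) * ‖P (n+2) - P (n+1)‖^2 : ℝ) : EReal) + mE n ≤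
          GG (n+1) (P (n+2)) := by
        rw [hGsucc n (P (n+2)), add_comm]
        exact add_le_add_left (hmE_le n (P (n+2))) _
      have s2 : GG (n+1) (P (n+2)) ≤ mE (n+1) + ((δ*(1/4)^(n+1) : ℝ) : EReal) := (hpt (n+1)).le
      have s3 : mE (n+1) ≤ GG n (P (n+1)) := by
        refine (hmE_le (n+1) (P (n+1))).trans ?_
        rw [hGsucc n (P (n+1))]
        simp
      have s4 : GG n (P (n+1)) ≤ mE n + ((δ*(1/4)^n : ℝ) : EReal) := (hpt n).le
      calc ((lam * (1/2)^(n+1) * ‖P (n+2) - P (n+1)‖^2 : ℝ) : EReal) + mE n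
          ≤ mE (n+1) + ((δ*(1/4)^(n+1) : ℝ) : EReal) := s1.trans s2
        _ ≤ (mE n + ((δ*(1/4)^n : ℝ) : EReal)) + ((δ*(1/4)^(n+1) : ℝ) : EReal) :=
            add_le_add_left (s3.trans s4) _
        _ = ((mR n + (δ*(1/4)^n + δ*(1/4)^(n+1)) : ℝ) : EReal) := by
            rw [hmR n, ← EReal.coe_add, ← EReal.coe_add]
            exact EReal.coe_eq_coe_iff.mpr (by ring)
    rw [hmR n, ← EReal.coe_add] at e1
    have e2 : lam * (1/2)^(n+1) * ‖P (n+2) - P (n+1)‖^2 + mR n ≤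
        mR n + (δ*(1/4)^n + δ*(1/4)^(n+1)) := by exact_mod_cast e1
    linarith
  have hstep2 : ∀ n, ‖P (n+2) - P (n+1)‖ ≤ 2*Real.sqrt δ * (3/4)^n := by
    intro n
    have hp : (0:ℝ) < (1/2:ℝ)^(n+1) := by positivity
    have h1 : ‖P (n+2) - P (n+1)‖^2 ≤ 4*δ*(1/2)^n := by
      have hle1 : (1/2:ℝ)^(n+1) * ‖P (n+2) - P (n+1)‖^2 ≤
          lam * (1/2)^(n+1) * ‖P (n+2) - P (n+1)‖^2 := by
        have h11 : (1:ℝ)*(1/2)^(n+1) ≤ lam*(1/2)^(n+1) :=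
          mul_le_mul_of_nonneg_right hlam1 hp.le
        calc (1/2:ℝ)^(n+1) * ‖P (n+2) - P (n+1)‖^2
            = (1*(1/2)^(n+1)) * ‖P (n+2) - P (n+1)‖^2 := by ring
          _ ≤ (lam*(1/2)^(n+1)) * ‖P (n+2) - P (n+1)‖^2 :=
              mul_le_mul_of_nonneg_right h11 (sq_nonneg _)
      have h2 : δ*(1/4)^n + δ*(1/4)^(n+1) ≤ 2*δ*(1/4)^n := by
        have h21 : (1/4:ℝ)^(n+1) ≤ (1/4)^n := by
          rw [pow_succ]
          nlinarith [pow_pos (by norm_num : (0:ℝ) < 1/4) n]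
        nlinarith [hδpos.le]
      have key : (1/2:ℝ)^(n+1) * ‖P (n+2) - P (n+1)‖^2 ≤ 2*δ*(1/4)^n :=
        hle1.trans ((hstep n).trans h2)
      have h4 : ((1/4:ℝ))^n = (1/2:ℝ)^n * (1/2)^n := by rw [← mul_pow]; norm_num
      have h5 : (1/2:ℝ)^(n+1) = (1/2) * (1/2)^n := by rw [pow_succ]; ring
      rw [h4, h5] at key
      have hpn : (0:ℝ) < (1/2:ℝ)^n := by positivity
      nlinarith [key, hpn]
    have hs : ‖P (n+2) - P (n+1)‖^2 ≤ (2*Real.sqrt δ*(3/4)^n)^2 := by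
      have he : (2*Real.sqrt δ*(3/4)^n)^2 = 4*δ*(9/16)^n := by
        have : ((3/4:ℝ)^n)^2 = (9/16:ℝ)^n := by
          rw [← pow_mul, mul_comm, pow_mul]; norm_num
        rw [mul_pow, mul_pow, Real.sq_sqrt hδpos.le, this]; ring
      have hmono : (4:ℝ)*δ*(1/2)^n ≤ 4*δ*(9/16)^n := by
        have h6 : ((1/2:ℝ))^n ≤ (9/16)^n := by
          apply pow_le_pow_left₀ (by norm_num) (by norm_num)
        nlinarith [hδpos.le]
      rw [he]; linarith
    calc ‖P (n+2) - P (n+1)‖ = Real.sqrt (‖P (n+2) - P (n+1)‖^2) :=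
          (Real.sqrt_sq (norm_nonneg _)).symm
      _ ≤ Real.sqrt ((2*Real.sqrt δ*(3/4)^n)^2) := Real.sqrt_le_sqrt hs
      _ = 2*Real.sqrt δ*(3/4)^n := Real.sqrt_sq (by positivity)
  -- first step estimate
  have hfirst : ‖P 1 - xb‖ ≤ ε/2 := by
    have h1 : GG 0 (P 1) < f xb + ((δ:ℝ) : EReal) := by
      have h0 := hpt 0
      have he : δ * (1/4:ℝ)^0 = δ := by norm_num
      rw [he] at h0
      refine h0.trans_le (add_le_add_left ?_ _)
      refine (hmE_le 0 xb).trans_eq ?_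
      rw [hG0 xb]
      simp
    have h4 := hGlowR 0 (P 1)
    have h5 : f xb + ((δ:ℝ) : EReal) = ((r + δ : ℝ) : EReal) := by
      rw [hfxb, ← EReal.coe_add]
    have h6 : φ₀ (P 1) + lam*‖P 1 - xb‖^2 ≤ r + δ := by
      have := (h4.trans_lt (h1.trans_eq h5)).le
      exact_mod_cast this
    have h7 : M*‖P 1 - xb‖^2 - C*‖P 1 - xb‖ ≤ 2*δ := by
      have := hquad (P 1); linarith
    by_contra hcon
    push_neg at hcon
    have hM3 : (2*C+2) ≤ M * ε := by
      rw [div_le_iff₀ hε] at hM2; linarith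
    have hnn : (0:ℝ) ≤ ‖P 1 - xb‖ := norm_nonneg _
    nlinarith [hcon, h7, hδ1, hε, hnn, hM3, mul_le_mul_of_nonneg_left hcon.le (le_trans (by norm_num) hM1)]
  -- Cauchy sequence and limit
  have hdist : ∀ n, dist (P (n+1)) (P (n+2)) ≤ 2*Real.sqrt δ * (3/4)^n := by
    intro n
    rw [dist_eq_norm, norm_sub_rev]
    exact hstep2 n
  have hsummable : Summable (fun n : ℕ => 2*Real.sqrt δ * (3/4:ℝ)^n) :=
    (summable_geometric_of_lt_one (by norm_num) (by norm_num)).mul_left _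
  have hcauchy : CauchySeq (fun n => P (n+1)) :=
    cauchySeq_of_dist_le_of_summable _ hdist hsummable
  obtain ⟨xs, hxs⟩ := cauchySeq_tendsto_of_complete hcauchy
  have htsum : ∑' n : ℕ, 2*Real.sqrt δ * (3/4:ℝ)^n = 8 * Real.sqrt δ := by
    rw [tsum_mul_left, tsum_geometric_of_lt_one (by norm_num) (by norm_num)]
    norm_num
    ring
  have hP1xs : dist (P 1) xs ≤ 8 * Real.sqrt δ := by
    have := dist_le_tsum_of_dist_le_of_tendsto₀ _ hdist hsummable hxs
    rwa [htsum] at this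
  have hPn1 : ∀ n, dist (P (n+1)) (P 1) ≤ 8 * Real.sqrt δ := by
    intro n
    have h1 : dist (P 1) (P (n+1)) ≤ ∑ k ∈ Finset.range n, dist (P (k+1)) (P (k+2)) :=
      dist_le_range_sum_dist (fun k => P (k+1)) n
    have h2 : ∑ k ∈ Finset.range n, dist (P (k+1)) (P (k+2)) ≤
        ∑' k : ℕ, 2*Real.sqrt δ * (3/4:ℝ)^k := by
      apply le_trans (Finset.sum_le_sum (fun k _ => hdist k))
      exact hsummable.sum_le_tsum _ (fun k _ => by positivity)
    rw [dist_comm]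
    rw [htsum] at h2
    linarith
  have hsqδ : Real.sqrt δ ≤ ε/20 := by
    have h1 : δ ≤ (ε/20)^2 := by nlinarith [hδ2, hε]
    calc Real.sqrt δ ≤ Real.sqrt ((ε/20)^2) := Real.sqrt_le_sqrt h1
      _ = ε/20 := Real.sqrt_sq (by positivity)
  obtain ⟨R, hRdef⟩ : ∃ y : ℝ, y = ε/2 + 8 * Real.sqrt δ := ⟨_, rfl⟩
  have hR0 : 0 ≤ R := by rw [hRdef]; positivity
  have hRi : ∀ i, ‖P i - xb‖ ≤ R := by
    intro i
    match i with
    | 0 => rw [hP0]; simp [hR0]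
    | (n+1) =>
      have h1 : dist (P (n+1)) xb ≤ dist (P (n+1)) (P 1) + dist (P 1) xb := dist_triangle _ _ _
      have h2 : dist (P 1) xb ≤ ε/2 := by rw [dist_eq_norm]; exact hfirst
      rw [← dist_eq_norm, hRdef]
      linarith [hPn1 n]
  have hxsxb : dist xs xb ≤ R := by
    have h1 : dist xs xb ≤ dist xs (P 1) + dist (P 1) xb := dist_triangle _ _ _
    have h2 : dist (P 1) xb ≤ ε/2 := by rw [dist_eq_norm]; exact hfirst
    rw [dist_comm] at hP1xs
    rw [hRdef]
    linarith
  have hRε : R ≤ 9*ε/10 := by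
    rw [hRdef]
    have := hsqδ
    linarith
  -- geometric sums
  have hgeo : Summable (fun i : ℕ => (1/2:ℝ)^i) :=
    summable_geometric_of_lt_one (by norm_num) (by norm_num)
  have hμs : Summable (fun i : ℕ => lam * (1/2:ℝ)^i) := hgeo.mul_left lam
  have hgeosum : ∑' i : ℕ, (1/2:ℝ)^i = 2 := by
    rw [tsum_geometric_of_lt_one (by norm_num) (by norm_num)]; norm_num
  have hPb : ∀ i, ‖P i‖ ≤ R + ‖xb‖ := by
    intro i
    calc ‖P i‖ = ‖(P i - xb) + xb‖ := by rw [sub_add_cancel]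
      _ ≤ ‖P i - xb‖ + ‖xb‖ := norm_add_le _ _
      _ ≤ R + ‖xb‖ := by linarith [hRi i]
  -- summability of penalties
  have hQs : ∀ x : X, Summable (fun i : ℕ => lam * (1/2:ℝ)^i * ‖x - P i‖^2) := by
    intro x
    refine Summable.of_nonneg_of_le (fun i => by positivity) (fun i => ?_)
      (hμs.mul_right ((‖x - xb‖ + R)^2))
    have h1 : ‖x - P i‖ ≤ ‖x - xb‖ + R := by
      calc ‖x - P i‖ = ‖(x - xb) + (xb - P i)‖ := by rw [sub_add_sub_cancel]
        _ ≤ ‖x - xb‖ + ‖xb - P i‖ := norm_add_le _ _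
        _ ≤ ‖x - xb‖ + R := by rw [norm_sub_rev xb (P i)]; linarith [hRi i]
    have h2 : ‖x - P i‖^2 ≤ (‖x - xb‖ + R)^2 :=
      pow_le_pow_left₀ (norm_nonneg _) h1 2
    calc lam * (1/2:ℝ)^i * ‖x - P i‖^2 ≤ lam * (1/2)^i * (‖x - xb‖ + R)^2 :=
          mul_le_mul_of_nonneg_left h2 (by positivity)
      _ = lam * (1/2)^i * (‖x - xb‖ + R)^2 := rfl
  obtain ⟨Q, hQdef⟩ : ∃ y : X → ℝ, y = fun x => ∑' i : ℕ, lam * (1/2:ℝ)^i * ‖x - P i‖^2 :=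
    ⟨_, rfl⟩
  have hQx : ∀ x, Q x = ∑' i : ℕ, lam * (1/2:ℝ)^i * ‖x - P i‖^2 := fun x => by rw [hQdef]
  -- the center of mass v and constant c₁
  have hv : Summable (fun i : ℕ => (lam * (1/2:ℝ)^i) • P i) := by
    apply Summable.of_norm
    refine Summable.of_nonneg_of_le (fun i => norm_nonneg _) (fun i => ?_)
      (hμs.mul_right (R + ‖xb‖))
    rw [norm_smul, Real.norm_eq_abs, abs_of_nonneg (by positivity)]
    exact mul_le_mul_of_nonneg_left (hPb i) (by positivity)
  obtain ⟨v, hvdef⟩ : ∃ y : X, y = ∑' i : ℕ, (lam * (1/2:ℝ)^i) • P i := ⟨_, rfl⟩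
  have hc₁s : Summable (fun i : ℕ => lam * (1/2:ℝ)^i * ‖P i‖^2) := by
    refine Summable.of_nonneg_of_le (fun i => by positivity) (fun i => ?_)
      (hμs.mul_right ((R + ‖xb‖)^2))
    exact mul_le_mul_of_nonneg_left (pow_le_pow_left₀ (norm_nonneg _) (hPb i) 2) (by positivity)
  obtain ⟨c₁, hc₁def⟩ : ∃ y : ℝ, y = ∑' i : ℕ, lam * (1/2:ℝ)^i * ‖P i‖^2 := ⟨_, rfl⟩
  -- the quadratic formula for Q
  have hQform : ∀ x, Q x = (2*lam) * ‖x‖^2 - 2 * (inner ℝ v x : ℝ) + c₁ := by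
    intro x
    have hterm : ∀ i : ℕ, lam * (1/2:ℝ)^i * ‖x - P i‖^2 =
        (lam * (1/2:ℝ)^i * ‖x‖^2 - 2 * ((innerSL ℝ x) ((lam * (1/2:ℝ)^i) • P i)))
          + lam * (1/2:ℝ)^i * ‖P i‖^2 := by
      intro i
      have : (innerSL ℝ x) ((lam * (1/2:ℝ)^i) • P i) = (lam * (1/2:ℝ)^i) * (inner ℝ x (P i) : ℝ) := by
        have h1 : (innerSL ℝ x) ((lam * (1/2:ℝ)^i) • P i)
            = (inner ℝ x ((lam * (1/2:ℝ)^i) • P i) : ℝ) := rfl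
        rw [h1, real_inner_smul_right]
      rw [this, norm_sub_sq_real]
      ring
    have hA : Summable (fun i : ℕ => lam * (1/2:ℝ)^i * ‖x‖^2) := hμs.mul_right _
    have hB : Summable (fun i : ℕ => (innerSL ℝ x) ((lam * (1/2:ℝ)^i) • P i)) :=
      hv.map (innerSL ℝ x) (innerSL ℝ x).continuous
    have hB2 : Summable (fun i : ℕ => 2 * ((innerSL ℝ x) ((lam * (1/2:ℝ)^i) • P i))) :=
      hB.mul_left 2
    have e1 : Q x = ∑' i : ℕ,
        ((lam * (1/2:ℝ)^i * ‖x‖^2 - 2 * ((innerSL ℝ x) ((lam * (1/2:ℝ)^i) • P i)))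
          + lam * (1/2:ℝ)^i * ‖P i‖^2) := by
      rw [hQx]; exact tsum_congr hterm
    rw [e1, Summable.tsum_add (hA.sub hB2) hc₁s, Summable.tsum_sub hA hB2, tsum_mul_left,
      tsum_mul_right, tsum_mul_left, hgeosum, ← hc₁def]
    have e2 : ∑' i : ℕ, (innerSL ℝ x) ((lam * (1/2:ℝ)^i) • P i) = (inner ℝ x v : ℝ) := by
      rw [hvdef]
      exact (ContinuousLinearMap.map_tsum (innerSL ℝ x) hv).symm
    rw [e2, real_inner_comm x v]
    ring
  have hQcont : Continuous Q := by
    have he : Q = fun x => (2*lam) * ‖x‖^2 - 2 * ((innerSL ℝ v) x) + c₁ := by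
      funext x; rw [hQform x]; rfl
    rw [he]
    exact ((continuous_const.mul (continuous_norm.pow 2)).sub
      (continuous_const.mul (innerSL ℝ v).continuous)).add continuous_const
  -- the limit value m∞
  have hpartQ : ∀ (n : ℕ) (x : X),
      ∑ i ∈ Finset.range (n+1), lam * (1/2:ℝ)^i * ‖x - P i‖^2 ≤ Q x := by
    intro n x; rw [hQx]; exact (hQs x).sum_le_tsum _ (fun i _ => by positivity)
  have hmlQ : ∀ (n : ℕ) (x : X), mE n ≤ f x + ((Q x : ℝ) : EReal) := by
    intro n x
    refine (hmE_le n x).trans ?_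
    rw [hGsum n x]
    exact add_le_add_right (EReal.coe_le_coe_iff.mpr (hpartQ n x)) _
  have hsup_top : (⨆ n, mE n) ≠ ⊤ := by
    refine ((iSup_le (fun n => hmlQ n xb)).trans_lt ?_).ne
    exact EReal.add_lt_top hxtop (EReal.coe_ne_top _)
  have hsup_bot : (⨆ n, mE n) ≠ ⊥ := by
    have h1 : mE 0 ≤ ⨆ n, mE n := le_iSup (fun n => mE n) 0
    rw [hmR 0] at h1
    exact ((EReal.bot_lt_coe (mR 0)).trans_le h1).ne'
  obtain ⟨mi, hmi⟩ : ∃ y : ℝ, (⨆ n, mE n) = ((y:ℝ) : EReal) :=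
    ⟨_, (EReal.coe_toReal hsup_top hsup_bot).symm⟩
  have hmRmi : ∀ n, mR n ≤ mi := by
    intro n
    have h1 := le_iSup (fun n => mE n) n
    rw [hmi, hmR n] at h1
    exact EReal.coe_le_coe_iff.mp h1
  -- tail estimate
  have htail : ∀ n : ℕ, Q (P (n+1)) ≤
      (∑ i ∈ Finset.range (n+1), lam * (1/2:ℝ)^i * ‖P (n+1) - P i‖^2)
        + lam * (1/2:ℝ)^n * (2*R)^2 := by
    intro n
    rw [hQx, ← (hQs (P (n+1))).sum_add_tsum_nat_add (n+1)]
    apply add_le_add_right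
    have hbnd : ∀ i : ℕ, lam * (1/2:ℝ)^(i+(n+1)) * ‖P (n+1) - P (i+(n+1))‖^2 ≤
        (lam * (1/2:ℝ)^(n+1) * (2*R)^2) * (1/2)^i := by
      intro i
      have h1 : ‖P (n+1) - P (i+(n+1))‖ ≤ 2*R := by
        calc ‖P (n+1) - P (i+(n+1))‖
            = ‖(P (n+1) - xb) + (xb - P (i+(n+1)))‖ := by rw [sub_add_sub_cancel]
          _ ≤ ‖P (n+1) - xb‖ + ‖xb - P (i+(n+1))‖ := norm_add_le _ _
          _ ≤ R + R := by
              rw [norm_sub_rev xb (P (i+(n+1)))]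
              exact add_le_add (hRi _) (hRi _)
          _ = 2*R := by ring
      have h2 : ‖P (n+1) - P (i+(n+1))‖^2 ≤ (2*R)^2 :=
        pow_le_pow_left₀ (norm_nonneg _) h1 2
      calc lam * (1/2:ℝ)^(i+(n+1)) * ‖P (n+1) - P (i+(n+1))‖^2
          ≤ lam * (1/2:ℝ)^(i+(n+1)) * (2*R)^2 :=
            mul_le_mul_of_nonneg_left h2 (by positivity)
        _ = (lam * (1/2:ℝ)^(n+1) * (2*R)^2) * (1/2)^i := by rw [pow_add]; ring
    have hsum1 : Summable (fun i : ℕ =>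
        lam * (1/2:ℝ)^(i+(n+1)) * ‖P (n+1) - P (i+(n+1))‖^2) :=
      (summable_nat_add_iff (f := fun j : ℕ => lam * (1/2:ℝ)^j * ‖P (n+1) - P j‖^2)
        (n+1)).mpr (hQs (P (n+1)))
    calc ∑' i : ℕ, lam * (1/2:ℝ)^(i+(n+1)) * ‖P (n+1) - P (i+(n+1))‖^2
        ≤ ∑' i : ℕ, (lam * (1/2:ℝ)^(n+1) * (2*R)^2) * (1/2)^i :=
          hsum1.tsum_le_tsum hbnd (hgeo.mul_left _)
      _ = (lam * (1/2:ℝ)^(n+1) * (2*R)^2) * 2 := by rw [tsum_mul_left, hgeosum]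
      _ = lam * (1/2:ℝ)^n * (2*R)^2 := by rw [pow_succ]; ring
  -- the values f (P (n+1)) are real
  have hfP : ∀ n : ℕ, ∃ y : ℝ, f (P (n+1)) = ((y:ℝ) : EReal) := by
    intro n
    have h1 : f (P (n+1)) ≤ GG n (P (n+1)) := by
      rw [hGsum n (P (n+1))]
      exact le_add_of_nonneg_right (EReal.coe_nonneg.mpr (by positivity))
    have h2 : f (P (n+1)) ≠ ⊤ := by
      refine ((h1.trans_lt (hpt n)).trans ?_).ne
      exact EReal.add_lt_top (hmtop n) (EReal.coe_ne_top _)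
    exact ⟨(f (P (n+1))).toReal, (EReal.coe_toReal h2 (hbot _)).symm⟩
  choose F hF using hfP
  have hFineq : ∀ n : ℕ, F n + Q (P (n+1)) ≤ mi + (δ*(1/4:ℝ)^n + lam*(1/2:ℝ)^n*(2*R)^2) := by
    intro n
    have h1 := hpt n
    rw [hGsum n (P (n+1)), hF n, ← EReal.coe_add] at h1
    have h2 : mE n + ((δ*(1/4:ℝ)^n : ℝ) : EReal) ≤ ((mi + δ*(1/4:ℝ)^n : ℝ) : EReal) := by
      rw [hmR n, ← EReal.coe_add]
      exact EReal.coe_le_coe_iff.mpr (by linarith [hmRmi n])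
    have h3 : F n + ∑ i ∈ Finset.range (n+1), lam * (1/2:ℝ)^i * ‖P (n+1) - P i‖^2
        ≤ mi + δ*(1/4:ℝ)^n :=
      EReal.coe_le_coe_iff.mp (h1.le.trans h2)
    linarith [htail n]
  -- limits
  have hQl : Tendsto (fun n => Q (P (n+1))) atTop (𝓝 (Q xs)) := (hQcont.tendsto xs).comp hxs
  have hη : Tendsto (fun n : ℕ => mi + (δ*(1/4:ℝ)^n + lam*(1/2:ℝ)^n*(2*R)^2) - Q (P (n+1)))
      atTop (𝓝 (mi - Q xs)) := by
    have l1 : Tendsto (fun n : ℕ => (1/4:ℝ)^n) atTop (𝓝 0) :=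
      tendsto_pow_atTop_nhds_zero_of_lt_one (by norm_num) (by norm_num)
    have l2 : Tendsto (fun n : ℕ => (1/2:ℝ)^n) atTop (𝓝 0) :=
      tendsto_pow_atTop_nhds_zero_of_lt_one (by norm_num) (by norm_num)
    have l3 : Tendsto (fun n : ℕ => mi + (δ*(1/4:ℝ)^n + lam*(1/2:ℝ)^n*(2*R)^2))
        atTop (𝓝 (mi + (δ*0 + lam*0*(2*R)^2))) :=
      tendsto_const_nhds.add ((l1.const_mul δ).add ((l2.const_mul lam).mul_const ((2*R)^2)))
    have l4 := l3.sub hQl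
    have l5 : mi + (δ*0 + lam*0*(2*R)^2) - Q xs = mi - Q xs := by ring
    rwa [l5] at l4
  -- lower semicontinuity at the limit
  have hfxs : f xs ≤ ((mi - Q xs : ℝ) : EReal) := by
    by_contra hcon
    push_neg at hcon
    obtain ⟨b, hb1, hb2⟩ := exists_between hcon
    have hev1 : ∀ᶠ y in 𝓝 xs, b < f y := hflsc xs b hb2
    have hev2 : ∀ᶠ n in atTop, b < f (P (n+1)) := hxs.eventually hev1
    have hble : ∀ᶠ n in atTop, b ≤
        (((mi + (δ*(1/4:ℝ)^n + lam*(1/2:ℝ)^n*(2*R)^2) - Q (P (n+1))) : ℝ) : EReal) := by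
      filter_upwards [hev2] with n hn
      refine hn.le.trans ?_
      rw [hF n]
      exact EReal.coe_le_coe_iff.mpr (by linarith [hFineq n])
    have hlim2 : Tendsto (fun n : ℕ =>
        (((mi + (δ*(1/4:ℝ)^n + lam*(1/2:ℝ)^n*(2*R)^2) - Q (P (n+1))) : ℝ) : EReal))
        atTop (𝓝 ((mi - Q xs : ℝ) : EReal)) :=
      (continuous_coe_real_ereal.tendsto _).comp hη
    exact absurd (ge_of_tendsto hlim2 hble) (not_le.mpr hb1)
  have hxs_top : f xs ≠ ⊤ := (hfxs.trans_lt (EReal.coe_lt_top _)).ne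
  obtain ⟨Fs, hFs⟩ : ∃ y : ℝ, f xs = ((y:ℝ):EReal) :=
    ⟨_, (EReal.coe_toReal hxs_top (hbot xs)).symm⟩
  have hFsle : Fs + Q xs ≤ mi := by
    rw [hFs] at hfxs
    have := EReal.coe_le_coe_iff.mp hfxs
    linarith
  -- final assembly
  refine ⟨xs, ?_, ?_⟩
  · refine ⟨fun y => -(2*lam) * ‖y‖^2 + ((2:ℝ) • (innerSL ℝ v)) y + 0,
      ⟨2*lam, (2:ℝ) • (innerSL ℝ v), 0, by positivity, fun y => rfl⟩, ?_⟩
    intro x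
    have happ : ∀ y : X, ((2:ℝ) • (innerSL ℝ v)) y = 2 * (inner ℝ v y : ℝ) := by
      intro y; rfl
    have hφdiff : (-(2*lam) * ‖x‖^2 + ((2:ℝ) • (innerSL ℝ v)) x + 0)
        - (-(2*lam) * ‖xs‖^2 + ((2:ℝ) • (innerSL ℝ v)) xs + 0) = Q xs - Q x := by
      rw [happ x, happ xs, hQform x, hQform xs]
      ring
    have h1 : ((Fs + Q xs : ℝ) : EReal) ≤ f x + ((Q x : ℝ) : EReal) := by
      calc ((Fs + Q xs : ℝ) : EReal) ≤ ((mi : ℝ) : EReal) := EReal.coe_le_coe_iff.mpr hFsle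
        _ = ⨆ n, mE n := hmi.symm
        _ ≤ f x + ((Q x : ℝ) : EReal) := iSup_le (fun n => hmlQ n x)
    have h2 := BPaux.coe_sub_le h1
    show ((((fun y => -(2*lam) * ‖y‖^2 + ((2:ℝ) • (innerSL ℝ v)) y + 0) x
        - (fun y => -(2*lam) * ‖y‖^2 + ((2:ℝ) • (innerSL ℝ v)) y + 0) xs : ℝ)) : EReal)
        + f xs ≤ f x
    simp only []
    rw [hφdiff, hFs]
    calc ((Q xs - Q x : ℝ) : EReal) + ((Fs : ℝ) : EReal)
        = ((Fs + Q xs - Q x : ℝ) : EReal) := by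
          rw [← EReal.coe_add]
          exact EReal.coe_eq_coe_iff.mpr (by ring)
      _ ≤ f x := h2
  · rw [dist_comm]
    calc dist xs xb ≤ R := hxsxb
      _ ≤ 9*ε/10 := hRε
      _ < ε := by linarith
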